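/- Let k ∈ V be a nonzero null vector and (n, m, m̄) a Newman–Penrose tetrad adapted to k. For z₁, z₂, z₄, z₅, z₆ ∈ ℂ, let a = z₁ m⊙m + z₂ m̄⊙m̄ + z₄ k⊙k + z₅ k⊙m + z₆ k⊙m̄ (i.e. a traceless transverse polarization tensor, z₃ = 0), and let ā denote its complex conjugate form, ā(u,v) = conj(a(ū, v̄)). Then the full metric contraction satisfies ⟨ā, a⟩ = |z₁|² + |z₂|². -/

import Mathlib

open scoped TensorProduct
open Module

noncomputable section

variable {V : Type} [AddCommGroup V] [Module ℝ V]

/-- The complexification `W = ℂ ⊗ V` of the real vector space `V`. -/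
abbrev Cx (V : Type) [AddCommGroup V] [Module ℝ V] := ℂ ⊗[ℝ] V

/-- The canonical inclusion of `V` into its complexification `W = ℂ ⊗ V`. -/
def ι (v : V) : Cx V := (1 : ℂ) ⊗ₜ[ℝ] v

/-- Complex conjugation `u ↦ ū` on `W = ℂ ⊗ V` induced by the real structure. -/
def conjW : Cx V →ₗ[ℝ] Cx V :=
  TensorProduct.map Complex.conjAe.toLinearMap LinearMap.id

lemma conjW_smul (c : ℂ) (u : Cx V) :
    conjW (c • u) = (starRingEnd ℂ c) • conjW u := by
  induction u using TensorProduct.induction_on with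
  | zero => simp
  | tmul x v =>
      simp [conjW, TensorProduct.smul_tmul', smul_eq_mul, map_mul, TensorProduct.map_tmul]
  | add a b ha hb => simp [smul_add, map_add, ha, hb]

/-- The ℂ-bilinear extension of `g` to `W = ℂ ⊗ V`. -/
def gW (g : LinearMap.BilinForm ℝ V) : LinearMap.BilinForm ℂ (Cx V) :=
  g.baseChange ℂ

/-- The symmetric product `u ⊙ v`, as a complex bilinear form on `W`:
`(u ⊙ v)(a,b) = (1/2) (g(u,a) g(v,b) + g(v,a) g(u,b))`. -/
def sprod (g : LinearMap.BilinForm ℝ V) (u v : Cx V) : LinearMap.BilinForm ℂ (Cx V) :=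
  LinearMap.mk₂ ℂ
    (fun a b => (1 / 2 : ℂ) * (gW g u a * gW g v b + gW g v a * gW g u b))
    (by intro a a' b; simp only [map_add]; ring)
    (by intro c a b; simp only [map_smul, smul_eq_mul]; ring)
    (by intro a b b'; simp only [map_add]; ring)
    (by intro a c b; simp only [map_smul, smul_eq_mul]; ring)

/-- The symmetric product with a fixed vector, as a linear map `b ↦ u ⊙ b`. -/
def sprodL (g : LinearMap.BilinForm ℝ V) (u : Cx V) :
    Cx V →ₗ[ℂ] LinearMap.BilinForm ℂ (Cx V) where
  toFun v := sprod g u v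
  map_add' v v' := by
    refine LinearMap.ext fun a => LinearMap.ext fun b => ?_
    simp only [sprod, LinearMap.mk₂_apply, LinearMap.add_apply, map_add]
    ring
  map_smul' c v := by
    refine LinearMap.ext fun a => LinearMap.ext fun b => ?_
    simp only [sprod, LinearMap.mk₂_apply, LinearMap.smul_apply, map_smul, smul_eq_mul,
      RingHom.id_apply]
    ring

/-- The conjugate form `ā` of a complex bilinear form `a` on `W`:
`ā(u,v) = conj (a(ū, v̄))`. -/
def conjForm (a : LinearMap.BilinForm ℂ (Cx V)) : LinearMap.BilinForm ℂ (Cx V) :=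
  LinearMap.mk₂ ℂ (fun u v => starRingEnd ℂ (a (conjW u) (conjW v)))
    (by intro u u' v; simp only [map_add, LinearMap.add_apply])
    (by intro c u v; simp only [conjW_smul, map_smul, LinearMap.smul_apply, smul_eq_mul,
          map_mul, Complex.conj_conj])
    (by intro u v v'; simp only [map_add])
    (by intro u c v; simp only [conjW_smul, map_smul, LinearMap.smul_apply, smul_eq_mul,
          map_mul, Complex.conj_conj])

/-- A Newman–Penrose tetrad `(k, n, m, m̄)` adapted to a nonzero null `k ∈ V`:
all the orthogonality relations of the tetrad. -/
def IsNPTetrad (g : LinearMap.BilinForm ℝ V) (k n : V) (m : Cx V) : Prop :=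
  gW g m (conjW m) = 1 ∧ gW g (ι k) (ι n) = -1 ∧
    gW g (ι k) (ι k) = 0 ∧ gW g (ι n) (ι n) = 0 ∧
    gW g m m = 0 ∧ gW g (conjW m) (conjW m) = 0 ∧
    gW g (ι k) m = 0 ∧ gW g (ι k) (conjW m) = 0 ∧
    gW g (ι n) m = 0 ∧ gW g (ι n) (conjW m) = 0

variable [FiniteDimensional ℝ V]

/-- The `g`-associated endomorphism `Ŝ` of a bilinear form `S` on `W`, characterized by
`g(Ŝ a, b) = S(a, b)` (defined when the extension of `g` to `W` is nondegenerate, which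
holds whenever `g` is nondegenerate). -/
def hatEnd (g : LinearMap.BilinForm ℝ V) (S : LinearMap.BilinForm ℂ (Cx V)) :
    Cx V →ₗ[ℂ] Cx V :=
  letI := Classical.dec ((gW g).Nondegenerate)
  if hnd : (gW g).Nondegenerate then ((gW g).toDual hnd).symm.toLinearMap ∘ₗ S else 0

/-- The metric trace `tr_g S` of a bilinear form `S` on `W`. -/
def trg (g : LinearMap.BilinForm ℝ V) (S : LinearMap.BilinForm ℂ (Cx V)) : ℂ :=
  LinearMap.trace ℂ (Cx V) (hatEnd g S)

/-- The full metric contraction `⟨A, B⟩ = tr (Â ∘ B̂)` of bilinear forms on `W`. -/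
def contr (g : LinearMap.BilinForm ℝ V) (A B : LinearMap.BilinForm ℂ (Cx V)) : ℂ :=
  LinearMap.trace ℂ (Cx V) (hatEnd g A ∘ₗ hatEnd g B)

/-- The value `D[k](S)(u,v)` of the symbol operator `D[k]` on a bilinear form `S`. -/
def Dval (g : LinearMap.BilinForm ℝ V) (k : V) (S : LinearMap.BilinForm ℂ (Cx V))
    (u v : Cx V) : ℂ :=
  (1 / 2 : ℂ) *
    (gW g (ι k) (ι k) * S u v - gW g (ι k) (ι k) * gW g u v * trg g S
      + gW g (ι k) u * gW g (ι k) v * trg g S + gW g u v * S (ι k) (ι k)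
      - gW g (ι k) u * S (ι k) v - gW g (ι k) v * S (ι k) u)

/-- The symbol operator `D[k]`, acting on bilinear forms on `W`. -/
def Dop (g : LinearMap.BilinForm ℝ V) (k : V) (S : LinearMap.BilinForm ℂ (Cx V)) :
    LinearMap.BilinForm ℂ (Cx V) :=
  LinearMap.mk₂ ℂ (fun u v => Dval g k S u v)
    (by intro u u' v; simp only [Dval, map_add, LinearMap.add_apply]; ring)
    (by intro c u v; simp only [Dval, map_smul, LinearMap.smul_apply, smul_eq_mul]; ring)
    (by intro u v v'; simp only [Dval, map_add, LinearMap.add_apply]; ring)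
    (by intro u c v; simp only [Dval, map_smul, LinearMap.smul_apply, smul_eq_mul]; ring)



section Aux

variable {V : Type} [AddCommGroup V] [Module ℝ V]

lemma conjW_conjW (u : Cx V) : conjW (conjW u) = u := by
  induction u using TensorProduct.induction_on with
  | zero => simp
  | tmul x v => simp [conjW]
  | add a b ha hb => simp [map_add, ha, hb]

lemma conjW_ι (k : V) : conjW (ι k) = ι k := by
  simp [conjW, ι]

lemma gW_conj (g : LinearMap.BilinForm ℝ V) (u v : Cx V) :
    starRingEnd ℂ (gW g u v) = gW g (conjW u) (conjW v) := by
  induction u using TensorProduct.induction_on with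
  | zero => simp
  | tmul x a =>
      induction v using TensorProduct.induction_on with
      | zero => simp
      | tmul y b =>
          simp [conjW, gW, LinearMap.BilinForm.baseChange_tmul, map_mul, smul_eq_mul]
      | add p q hp hq => simp only [map_add, hp, hq]
  | add p q hp hq => simp only [map_add, LinearMap.add_apply, hp, hq]

lemma gW_symm (g : LinearMap.BilinForm ℝ V) (hsymm : g.IsSymm) (u v : Cx V) :
    gW g u v = gW g v u := by
  simpa [gW] using ((LinearMap.BilinForm.IsSymm.baseChange ℂ (LinearMap.BilinForm.isSymm_iff.mp hsymm)).eq u v)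

lemma gW_nondeg [FiniteDimensional ℝ V] (g : LinearMap.BilinForm ℝ V)
    (hg : g.Nondegenerate) : (gW g).Nondegenerate := by
  classical
  let b := finBasis ℝ V
  let bC := b.baseChange ℂ
  apply LinearMap.BilinForm.nondegenerate_of_det_ne_zero (B₃ := gW g) bC
  have hmat : LinearMap.BilinForm.toMatrix bC (gW g)
      = (LinearMap.BilinForm.toMatrix b g).map (algebraMap ℝ ℂ) := by
    ext i j
    simp [LinearMap.BilinForm.toMatrix_apply, bC, Basis.baseChange_apply, gW,
      LinearMap.BilinForm.baseChange_tmul, Algebra.algebraMap_eq_smul_one]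
  rw [hmat, ← RingHom.mapMatrix_apply, ← RingHom.map_det]
  have hdet : (LinearMap.BilinForm.toMatrix b g).det ≠ 0 :=
    (LinearMap.BilinForm.nondegenerate_iff_det_ne_zero b).mp hg
  simpa using hdet

variable [FiniteDimensional ℝ V]

lemma hatEnd_eq (g : LinearMap.BilinForm ℝ V) (hnd : (gW g).Nondegenerate)
    (S : LinearMap.BilinForm ℂ (Cx V)) (T : Cx V →ₗ[ℂ] Cx V)
    (h : ∀ a b, gW g (T a) b = S a b) : hatEnd g S = T := by
  classical
  unfold hatEnd
  rw [dif_pos hnd]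
  refine LinearMap.ext fun a => ?_
  apply ((gW g).toDual hnd).injective
  rw [LinearMap.comp_apply, LinearEquiv.coe_toLinearMap, LinearEquiv.apply_symm_apply]
  refine LinearMap.ext fun b => ?_
  rw [← h a b]
  rfl

lemma hatEnd_add (g : LinearMap.BilinForm ℝ V) (S T : LinearMap.BilinForm ℂ (Cx V)) :
    hatEnd g (S + T) = hatEnd g S + hatEnd g T := by
  classical
  unfold hatEnd
  split_ifs with h
  · exact LinearMap.comp_add _ _ _
  · simp

lemma hatEnd_smul (g : LinearMap.BilinForm ℝ V) (c : ℂ) (S : LinearMap.BilinForm ℂ (Cx V)) :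
    hatEnd g (c • S) = c • hatEnd g S := by
  classical
  unfold hatEnd
  split_ifs with h
  · exact LinearMap.comp_smul _ _ _
  · simp

lemma contr_add_left (g : LinearMap.BilinForm ℝ V) (A A' B : LinearMap.BilinForm ℂ (Cx V)) :
    contr g (A + A') B = contr g A B + contr g A' B := by
  simp [contr, hatEnd_add, LinearMap.add_comp, map_add]

lemma contr_add_right (g : LinearMap.BilinForm ℝ V) (A B B' : LinearMap.BilinForm ℂ (Cx V)) :
    contr g A (B + B') = contr g A B + contr g A B' := by
  simp [contr, hatEnd_add, LinearMap.comp_add, map_add]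

lemma contr_smul_left (g : LinearMap.BilinForm ℝ V) (c : ℂ)
    (A B : LinearMap.BilinForm ℂ (Cx V)) :
    contr g (c • A) B = c * contr g A B := by
  simp [contr, hatEnd_smul, LinearMap.smul_comp, map_smul, smul_eq_mul]

lemma contr_smul_right (g : LinearMap.BilinForm ℝ V) (c : ℂ)
    (A B : LinearMap.BilinForm ℂ (Cx V)) :
    contr g A (c • B) = c * contr g A B := by
  simp [contr, hatEnd_smul, LinearMap.comp_smul, map_smul, smul_eq_mul]

lemma hatEnd_sprod (g : LinearMap.BilinForm ℝ V) (hg : g.Nondegenerate) (u v : Cx V) :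
    hatEnd g (sprod g u v)
      = (1 / 2 : ℂ) • ((gW g u).smulRight v + (gW g v).smulRight u) := by
  apply hatEnd_eq g (gW_nondeg g hg)
  intro a b
  simp only [LinearMap.smul_apply, LinearMap.add_apply, LinearMap.smulRight_apply,
    map_add, map_smul, smul_eq_mul, sprod, LinearMap.mk₂_apply]

lemma trace_smulRight' (f : Cx V →ₗ[ℂ] ℂ) (a : Cx V) :
    LinearMap.trace ℂ (Cx V) (f.smulRight a) = f a := by
  have h : f.smulRight a = dualTensorHom ℂ (Cx V) (Cx V) (f ⊗ₜ a) := by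
    ext x; simp
  rw [h, LinearMap.trace_eq_contract_apply, contractLeft_apply]

lemma smulRight_comp_smulRight (f h : Cx V →ₗ[ℂ] ℂ) (a b : Cx V) :
    (f.smulRight a) ∘ₗ (h.smulRight b) = f b • h.smulRight a := by
  ext x
  simp [smul_smul, mul_comm]

lemma contr_sprod (g : LinearMap.BilinForm ℝ V) (hg : g.Nondegenerate) (u v x y : Cx V) :
    contr g (sprod g u v) (sprod g x y)
      = (1 / 4 : ℂ) * (gW g u y * gW g x v + gW g u x * gW g y v
        + gW g v y * gW g x u + gW g v x * gW g y u) := by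
  rw [contr, hatEnd_sprod g hg, hatEnd_sprod g hg]
  simp only [LinearMap.smul_comp, LinearMap.comp_smul, LinearMap.add_comp,
    LinearMap.comp_add, smulRight_comp_smulRight, map_add, map_smul, trace_smulRight',
    smul_eq_mul, smul_add]
  ring

end Aux

/-- For a traceless transverse polarization tensor
`a = z₁ m⊙m + z₂ m̄⊙m̄ + z₄ k⊙k + z₅ k⊙m + z₆ k⊙m̄`, the full metric contraction
with its conjugate satisfies `⟨ā, a⟩ = |z₁|² + |z₂|²`. -/
theorem statement_12 (g : LinearMap.BilinForm ℝ V) (hdim : finrank ℝ V = 4)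
    (hg : g.Nondegenerate) (hsymm : g.IsSymm)
    (k n : V) (m : Cx V) (hk : k ≠ 0) (hknull : g k k = 0)
    (htetrad : IsNPTetrad g k n m)
    (z₁ z₂ z₄ z₅ z₆ : ℂ) :
    contr g
        (conjForm (z₁ • sprod g m m + z₂ • sprod g (conjW m) (conjW m)
          + z₄ • sprod g (ι k) (ι k) + z₅ • sprod g (ι k) m
          + z₆ • sprod g (ι k) (conjW m)))
        (z₁ • sprod g m m + z₂ • sprod g (conjW m) (conjW m)
          + z₄ • sprod g (ι k) (ι k) + z₅ • sprod g (ι k) m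
          + z₆ • sprod g (ι k) (conjW m))
      = ((‖z₁‖ ^ 2 + ‖z₂‖ ^ 2 : ℝ) : ℂ) := by
  classical
  obtain ⟨h1, h2, h3, h4, h5, h6, h7, h8, h9, h10⟩ := htetrad
  have hs : ∀ u v : Cx V, gW g u v = gW g v u := gW_symm g hsymm
  have h1' : gW g (conjW m) m = 1 := by rw [hs]; exact h1
  have h7' : gW g m (ι k) = 0 := by rw [hs]; exact h7
  have h8' : gW g (conjW m) (ι k) = 0 := by rw [hs]; exact h8
  have hconj : conjForm (z₁ • sprod g m m + z₂ • sprod g (conjW m) (conjW m)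
      + z₄ • sprod g (ι k) (ι k) + z₅ • sprod g (ι k) m + z₆ • sprod g (ι k) (conjW m))
      = (starRingEnd ℂ z₁) • sprod g (conjW m) (conjW m) + (starRingEnd ℂ z₂) • sprod g m m
        + (starRingEnd ℂ z₄) • sprod g (ι k) (ι k)
        + (starRingEnd ℂ z₅) • sprod g (ι k) (conjW m)
        + (starRingEnd ℂ z₆) • sprod g (ι k) m := by
    refine LinearMap.ext fun a => LinearMap.ext fun b => ?_
    simp only [conjForm, sprod, LinearMap.mk₂_apply, LinearMap.add_apply,
      LinearMap.smul_apply, smul_eq_mul, map_add, map_mul]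
    simp only [gW_conj, conjW_conjW, conjW_ι, map_div₀, map_inv₀, map_ofNat, map_one]
  rw [hconj]
  simp only [contr_add_left, contr_add_right, contr_smul_left, contr_smul_right,
    contr_sprod g hg, h1, h1', h3, h5, h6, h7, h7', h8, h8']
  rw [Complex.ofReal_add, Complex.sq_norm, Complex.sq_norm, ← Complex.mul_conj,
    ← Complex.mul_conj]
  ring

end
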